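/- arXiv:1607.06310 — 2 statements merged into one kernel-verified Lean document; each statement's English description precedes it below -/
import Mathlib

section
/- Let ε > 0 and let φ : S¹ → S¹ be continuous with d_{S¹}(φ(ζ), ζ) ≤ ε for every ζ ∈ S¹ and with ξ_φ(0) = 0. Then for every w ∈ 𝔻 with |w| ≤ 1/2, one has (1 − 56ε)·|w| ≤ |ξ_φ(w)|. -/
/-- Arc-length distance on the unit circle: the infimum of `|x₁ − x₂|` over
representatives `ζ₁ = e^{ix₁}`, `ζ₂ = e^{ix₂}`. -/
noncomputable def dS1 (ζ₁ ζ₂ : ℂ) : ℝ :=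
  sInf {d : ℝ | ∃ x₁ x₂ : ℝ, ζ₁ = Complex.exp (Complex.I * (x₁ : ℂ)) ∧
    ζ₂ = Complex.exp (Complex.I * (x₂ : ℂ)) ∧ d = |x₁ - x₂|}

/-- The average `ξ_φ(w) = (1/2π)·∫₀^{2π} (φ(e^{ix}) − w)/(1 − w̄·φ(e^{ix})) dx`
of a circle map `φ` taken at `w` in the unit disk. -/
noncomputable def avgMap (φ : ℂ → ℂ) (w : ℂ) : ℂ :=
  (1 / (2 * Real.pi)) • ∫ x in (0 : ℝ)..(2 * Real.pi),
    (φ (Complex.exp (Complex.I * (x : ℂ))) - w) /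
      (1 - (starRingEnd ℂ) w * φ (Complex.exp (Complex.I * (x : ℂ))))

lemma negI_mul' (z : ℂ) : -(Complex.I * (z * Complex.I)) = z := by
  linear_combination (-z) * Complex.I_mul_I

lemma hasDerivAt_e (x : ℝ) :
    HasDerivAt (fun x : ℝ => Complex.exp (Complex.I * x))
      (Complex.exp (Complex.I * x) * Complex.I) x := by
  have h1 : HasDerivAt (fun x : ℝ => Complex.I * (x:ℂ)) Complex.I x := by
    simpa using (Complex.ofRealCLM.hasDerivAt (x := x)).const_mul Complex.I
  simpa using h1.cexp

lemma cont_e : Continuous (fun x : ℝ => Complex.exp (Complex.I * x)) :=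
  Complex.continuous_exp.comp (continuous_const.mul Complex.continuous_ofReal)

lemma abs_e (x : ℝ) : ‖Complex.exp (Complex.I * x)‖ = 1 := by
  rw [mul_comm]; exact Complex.norm_exp_ofReal_mul_I x

lemma e_two_pi : Complex.exp (Complex.I * ((2 * Real.pi : ℝ) : ℂ)) = 1 := by
  push_cast
  rw [mul_comm, Complex.exp_two_pi_mul_I]

lemma int_exp_eq_zero : (∫ x in (0:ℝ)..(2*Real.pi), Complex.exp (Complex.I * x)) = 0 := by
  have h : ∀ x ∈ Set.uIcc (0:ℝ) (2*Real.pi),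
      HasDerivAt (fun x : ℝ => -Complex.I * Complex.exp (Complex.I * x))
        (Complex.exp (Complex.I * x)) x := by
    intro x _
    have := (hasDerivAt_e x).const_mul (-Complex.I)
    simpa [negI_mul'] using this
  rw [intervalIntegral.integral_eq_sub_of_hasDerivAt h (cont_e.intervalIntegrable _ _)]
  rw [e_two_pi]
  simp

lemma den_ne_zero {c u : ℂ} (hc : ‖c‖ ≤ 1/2) (hu : ‖u‖ = 1) :
    1 - c * u ≠ 0 := by
  intro h
  have h1 : c * u = 1 := by linear_combination -h
  have : ‖c * u‖ = 1 := by rw [h1]; simp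
  rw [norm_mul, hu, mul_one] at this
  rw [this] at hc; norm_num at hc

lemma den_half {c u : ℂ} (hc : ‖c‖ ≤ 1/2) (hu : ‖u‖ = 1) :
    1/2 ≤ ‖1 - c * u‖ := by
  have h1 : ‖c * u‖ ≤ 1/2 := by rw [norm_mul, hu, mul_one]; exact hc
  have h2 := norm_sub_norm_le (1:ℂ) (c * u)
  simp only [norm_one] at h2
  linarith

lemma int_E_eq_zero {c : ℂ} (hc : ‖c‖ ≤ 1/2) (hc0 : c ≠ 0) :
    (∫ x in (0:ℝ)..(2*Real.pi),
      Complex.exp (Complex.I * x) / (1 - c * Complex.exp (Complex.I * x))) = 0 := by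
  set e := fun x : ℝ => Complex.exp (Complex.I * x) with he
  have habs : ∀ x : ℝ, ‖e x‖ = 1 := fun x => abs_e x
  have hne : ∀ x : ℝ, 1 - c * e x ≠ 0 := fun x => den_ne_zero hc (habs x)
  have hslit : ∀ x : ℝ, (1 - c * e x) ∈ Complex.slitPlane := by
    intro x
    apply Complex.mem_slitPlane_iff.2
    left
    have h1 : (1 - c * e x).re = 1 - (c * e x).re := by simp
    have h2 : (c * e x).re ≤ ‖c * e x‖ := Complex.re_le_norm _
    have h3 : ‖c * e x‖ ≤ 1/2 := by rw [norm_mul, habs, mul_one]; exact hc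
    rw [h1]; linarith
  have hderiv : ∀ x ∈ Set.uIcc (0:ℝ) (2*Real.pi),
      HasDerivAt (fun x : ℝ => (Complex.I / c) * Complex.log (1 - c * e x))
        (e x / (1 - c * e x)) x := by
    intro x _
    have h1 : HasDerivAt (fun x : ℝ => 1 - c * e x) (-(c * (e x * Complex.I))) x :=
      ((hasDerivAt_e x).const_mul c).const_sub 1
    have h2 := (h1.clog_real (hslit x)).const_mul (Complex.I / c)
    have key : (Complex.I / c) * (-(c * (e x * Complex.I)) / (1 - c * e x))
        = e x / (1 - c * e x) := by
      rw [div_mul_div_comm]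
      have hnum : Complex.I * -(c * (e x * Complex.I)) = c * e x := by
        linear_combination (-(c * e x)) * Complex.I_mul_I
      rw [hnum, mul_div_mul_left _ _ hc0]
    simpa only [key] using h2
  have hcont : Continuous fun x : ℝ => e x / (1 - c * e x) := by
    apply cont_e.div (continuous_const.sub (continuous_const.mul cont_e))
    exact hne
  rw [intervalIntegral.integral_eq_sub_of_hasDerivAt hderiv (hcont.intervalIntegrable _ _)]
  have h20 : e (2 * Real.pi) = e 0 := by
    simp only [he]
    rw [e_two_pi]
    norm_num
  rw [h20]
  ring

lemma chord_aux (t : ℝ) : ‖Complex.exp (Complex.I * t) - 1‖ ≤ |t| := by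
  have h2 : ‖Complex.exp (Complex.I * t) - 1‖ ^ 2 ≤ t ^ 2 := by
    rw [Complex.sq_norm, Complex.normSq_apply]
    simp only [Complex.sub_re, Complex.sub_im, Complex.one_re, Complex.one_im,
      mul_comm Complex.I (t:ℂ), Complex.exp_ofReal_mul_I_re, Complex.exp_ofReal_mul_I_im]
    have hc := Real.one_sub_sq_div_two_le_cos (x := t)
    have := Real.sin_sq_add_cos_sq t
    nlinarith
  nlinarith [norm_nonneg (Complex.exp (Complex.I * t) - 1), abs_nonneg t, _root_.sq_abs t]

lemma chord_le (ζ₁ ζ₂ : ℂ) (h1 : ‖ζ₁‖ = 1) (h2 : ‖ζ₂‖ = 1) :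
    ‖ζ₁ - ζ₂‖ ≤ dS1 ζ₁ ζ₂ := by
  apply le_csInf
  · refine ⟨|ζ₁.arg - ζ₂.arg|, ζ₁.arg, ζ₂.arg, ?_, ?_, rfl⟩
    · rw [mul_comm]
      conv_lhs => rw [← Complex.norm_mul_exp_arg_mul_I ζ₁]
      rw [h1]; simp
    · rw [mul_comm]
      conv_lhs => rw [← Complex.norm_mul_exp_arg_mul_I ζ₂]
      rw [h2]; simp
  · rintro d ⟨x₁, x₂, rfl, rfl, rfl⟩
    have key : Complex.exp (Complex.I * (x₁:ℂ)) - Complex.exp (Complex.I * (x₂:ℂ))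
        = Complex.exp (Complex.I * (x₂:ℂ)) * (Complex.exp (Complex.I * ((x₁ - x₂ : ℝ):ℂ)) - 1) := by
      rw [mul_sub, ← Complex.exp_add, mul_one]
      push_cast
      ring_nf
    rw [key, norm_mul, abs_e, one_mul]
    exact chord_aux (x₁ - x₂)

/-- If `φ : S¹ → S¹` is continuous with `d_{S¹}(φ(ζ), ζ) ≤ ε` for all
`ζ ∈ S¹` and `ξ_φ(0) = 0`, then `(1 − 56ε)·|w| ≤ |ξ_φ(w)|` for all `|w| ≤ 1/2`. -/
theorem stmt_12 (ε : ℝ) (hε : 0 < ε) (φ : ℂ → ℂ)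
    (hcont : ContinuousOn φ {z : ℂ | ‖z‖ = 1})
    (hmaps : ∀ ζ : ℂ, ‖ζ‖ = 1 → ‖φ ζ‖ = 1)
    (hclose : ∀ ζ : ℂ, ‖ζ‖ = 1 → dS1 (φ ζ) ζ ≤ ε)
    (hbar : avgMap φ 0 = 0) :
    ∀ w : ℂ, ‖w‖ ≤ 1 / 2 →
      (1 - 56 * ε) * ‖w‖ ≤ ‖avgMap φ w‖ := by
  intro w hw
  rcases eq_or_ne w 0 with rfl | hw0
  · simp [hbar]
  have hπ : (0:ℝ) < Real.pi := Real.pi_pos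
  set c : ℂ := (starRingEnd ℂ) w with hc
  have hcabs : ‖c‖ ≤ 1/2 := by rw [hc, Complex.norm_conj]; exact hw
  have hc0 : c ≠ 0 := by simp [hc, hw0]
  set e : ℝ → ℂ := fun x : ℝ => Complex.exp (Complex.I * x) with he
  set Φ : ℝ → ℂ := fun x : ℝ => φ (e x) with hΦ
  have habs_e : ∀ x : ℝ, ‖e x‖ = 1 := fun x => abs_e x
  have hΦabs : ∀ x : ℝ, ‖Φ x‖ = 1 := fun x => hmaps _ (habs_e x)
  have hΦcont : Continuous Φ := hcont.comp_continuous cont_e habs_e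
  have hneΦ : ∀ x : ℝ, 1 - c * Φ x ≠ 0 := fun x => den_ne_zero hcabs (hΦabs x)
  have hnee : ∀ x : ℝ, 1 - c * e x ≠ 0 := fun x => den_ne_zero hcabs (habs_e x)
  set G : ℝ → ℂ := fun x => (Φ x - e x) *
      ((c * Φ x + c * e x - c * c * (Φ x * e x)) / ((1 - c * Φ x) * (1 - c * e x))) with hG
  -- pointwise identity
  have hpt : ∀ x : ℝ, (Φ x - w) / (1 - c * Φ x)
      = -w + (1 - c * w) * (e x / (1 - c * e x) + (Φ x - e x) + G x) := by
    intro x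
    have h1 := hneΦ x
    have h2 := hnee x
    have h1' : 1 - Φ x * c ≠ 0 := by rwa [mul_comm]
    have h2' : 1 - e x * c ≠ 0 := by rwa [mul_comm]
    simp only [hG]
    field_simp
    ring
  -- continuity of pieces
  have contE : Continuous fun x : ℝ => e x / (1 - c * e x) :=
    cont_e.div (continuous_const.sub (continuous_const.mul cont_e)) hnee
  have contΦe : Continuous fun x : ℝ => Φ x - e x := hΦcont.sub cont_e
  have contG : Continuous G := by
    apply contΦe.mul
    apply Continuous.div
    · exact ((continuous_const.mul hΦcont).add (continuous_const.mul cont_e)).sub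
        (continuous_const.mul (hΦcont.mul cont_e))
    · exact ((continuous_const.sub (continuous_const.mul hΦcont)).mul
        (continuous_const.sub (continuous_const.mul cont_e)))
    · intro x
      exact mul_ne_zero (hneΦ x) (hnee x)
  -- ∫ Φ = 0
  have hΦint : (∫ x in (0:ℝ)..(2*Real.pi), Φ x) = 0 := by
    have h2 : avgMap φ 0 = (1 / (2 * Real.pi)) • ∫ x in (0:ℝ)..(2*Real.pi), Φ x := by
      rw [avgMap]
      simp [hΦ, he]
    rw [h2] at hbar
    have hne : (1 / (2 * Real.pi)) ≠ (0:ℝ) := by positivity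
    rcases smul_eq_zero.1 hbar with h | h
    · exact absurd h hne
    · exact h
  -- main computation
  have hsum : (∫ x in (0:ℝ)..(2*Real.pi),
      (e x / (1 - c * e x) + (Φ x - e x) + G x))
      = ∫ x in (0:ℝ)..(2*Real.pi), G x := by
    rw [intervalIntegral.integral_add (f := fun x => e x / (1 - c * e x) + (Φ x - e x))
      ((contE.add contΦe).intervalIntegrable _ _)
      (contG.intervalIntegrable _ _), intervalIntegral.integral_add (f := fun x => e x / (1 - c * e x))
        (g := fun x => Φ x - e x) (contE.intervalIntegrable _ _)
      (contΦe.intervalIntegrable _ _), intervalIntegral.integral_sub (hΦcont.intervalIntegrable _ _)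
      (cont_e.intervalIntegrable _ _)]
    rw [int_E_eq_zero hcabs hc0, hΦint, int_exp_eq_zero]
    ring
  have main : avgMap φ w = -w + (1 / (2 * Real.pi)) •
      ((1 - c * w) * ∫ x in (0:ℝ)..(2*Real.pi), G x) := by
    rw [avgMap]
    have hcongr : (∫ x in (0:ℝ)..(2*Real.pi),
        (φ (Complex.exp (Complex.I * (x : ℂ))) - w) /
          (1 - (starRingEnd ℂ) w * φ (Complex.exp (Complex.I * (x : ℂ)))))
        = ∫ x in (0:ℝ)..(2*Real.pi),
          (-w + (1 - c * w) * (e x / (1 - c * e x) + (Φ x - e x) + G x)) := by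
      apply intervalIntegral.integral_congr
      intro x _
      exact hpt x
    rw [hcongr]
    rw [intervalIntegral.integral_add
      (g := fun x => (1 - c * w) * (e x / (1 - c * e x) + (Φ x - e x) + G x)) intervalIntegrable_const
      ((continuous_const.mul ((contE.add contΦe).add contG)).intervalIntegrable _ _),
      intervalIntegral.integral_const_mul, hsum, intervalIntegral.integral_const]
    rw [smul_add, smul_smul]
    congr 1
    rw [sub_zero]
    rw [show (1 / (2 * Real.pi)) * (2 * Real.pi) = 1 by field_simp]
    simp
  -- bound on G
  have hGbound : ∀ x : ℝ, ‖G x‖ ≤ 10 * ε * ‖w‖ := by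
    intro x
    have h1 : ‖Φ x - e x‖ ≤ ε :=
      le_trans (chord_le _ _ (hΦabs x) (habs_e x)) (hclose _ (habs_e x))
    have hcw : ‖c‖ = ‖w‖ := Complex.norm_conj w
    have hnum : ‖c * Φ x + c * e x - c * c * (Φ x * e x)‖
        ≤ (5/2) * ‖w‖ := by
      have t1 : ‖c * Φ x‖ = ‖w‖ := by
        rw [norm_mul, hΦabs, mul_one, hcw]
      have t2 : ‖c * e x‖ = ‖w‖ := by
        rw [norm_mul, habs_e, mul_one, hcw]
      have t3 : ‖c * c * (Φ x * e x)‖ = ‖w‖ * ‖w‖ := by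
        rw [norm_mul, norm_mul, norm_mul, hΦabs, habs_e, mul_one, mul_one, hcw]
      have tri : ‖c * Φ x + c * e x - c * c * (Φ x * e x)‖
          ≤ ‖c * Φ x‖ + ‖c * e x‖
            + ‖c * c * (Φ x * e x)‖ := by
        calc ‖c * Φ x + c * e x - c * c * (Φ x * e x)‖
            ≤ ‖c * Φ x + c * e x‖ + ‖c * c * (Φ x * e x)‖ :=
              norm_sub_le _ _
          _ ≤ _ := by
              have := norm_add_le (c * Φ x) (c * e x)
              linarith
      rw [t1, t2, t3] at tri
      have hwn : (0:ℝ) ≤ ‖w‖ := norm_nonneg w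
      nlinarith
    have hden : (1/4 : ℝ) ≤ ‖(1 - c * Φ x) * (1 - c * e x)‖ := by
      rw [norm_mul]
      have d1 := den_half hcabs (hΦabs x)
      have d2 := den_half hcabs (habs_e x)
      nlinarith [norm_nonneg (1 - c * Φ x), norm_nonneg (1 - c * e x)]
    have hfrac : ‖(c * Φ x + c * e x - c * c * (Φ x * e x)) /
        ((1 - c * Φ x) * (1 - c * e x))‖ ≤ 10 * ‖w‖ := by
      rw [norm_div]
      have := div_le_div₀ (by positivity) hnum (by norm_num : (0:ℝ) < 1/4) hden
      calc ‖c * Φ x + c * e x - c * c * (Φ x * e x)‖ /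
            ‖(1 - c * Φ x) * (1 - c * e x)‖
          ≤ (5/2) * ‖w‖ / (1/4) := this
        _ = 10 * ‖w‖ := by ring
    rw [hG]
    rw [norm_mul]
    calc ‖Φ x - e x‖ * ‖(c * Φ x + c * e x - c * c * (Φ x * e x)) /
          ((1 - c * Φ x) * (1 - c * e x))‖
        ≤ ε * (10 * ‖w‖) := by
          apply mul_le_mul h1 hfrac (norm_nonneg _) (le_of_lt hε)
      _ = 10 * ε * ‖w‖ := by ring
  -- bound on the integral
  have hIb : ‖∫ x in (0:ℝ)..(2*Real.pi), G x‖
      ≤ 10 * ε * ‖w‖ * (2 * Real.pi) := by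
    have := intervalIntegral.norm_integral_le_of_norm_le_const
      (C := 10 * ε * ‖w‖) (f := G) (a := (0:ℝ)) (b := 2*Real.pi)
      (fun x _ => by exact hGbound x)
    calc ‖∫ x in (0:ℝ)..(2*Real.pi), G x‖
        ≤ 10 * ε * ‖w‖ * |2 * Real.pi - 0| := this
      _ = 10 * ε * ‖w‖ * (2 * Real.pi) := by
          rw [sub_zero, abs_of_pos (by positivity)]
  -- bound on 1 - c w
  have h1cw : ‖1 - c * w‖ ≤ 1 := by
    have hcwr : c * w = ((Complex.normSq w : ℝ) : ℂ) := by
      rw [hc, mul_comm, Complex.mul_conj]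
    rw [hcwr, ← Complex.ofReal_one, ← Complex.ofReal_sub, Complex.norm_real, Real.norm_eq_abs]
    have h0 := Complex.normSq_nonneg w
    have h2 : Complex.normSq w ≤ 1 := by
      rw [← Complex.sq_norm]
      nlinarith [norm_nonneg w]
    rw [abs_of_nonneg (by linarith)]
    linarith
  -- final bound
  have hfinal : ‖avgMap φ w + w‖ ≤ 10 * ε * ‖w‖ := by
    rw [main]
    have heq : -w + (1 / (2 * Real.pi)) •
        ((1 - c * w) * ∫ x in (0:ℝ)..(2*Real.pi), G x) + w
        = (1 / (2 * Real.pi)) • ((1 - c * w) * ∫ x in (0:ℝ)..(2*Real.pi), G x) := by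
      abel
    rw [heq]
    rw [norm_smul, Real.norm_eq_abs, abs_of_pos (by positivity),
      norm_mul]
    calc (1 / (2 * Real.pi)) * (‖1 - c * w‖ *
          ‖∫ x in (0:ℝ)..(2*Real.pi), G x‖)
        ≤ (1 / (2 * Real.pi)) * (1 * (10 * ε * ‖w‖ * (2 * Real.pi))) := by
          apply mul_le_mul_of_nonneg_left _ (by positivity)
          apply mul_le_mul h1cw hIb (norm_nonneg _) (by norm_num)
      _ = 10 * ε * ‖w‖ := by field_simp
  have htri : ‖w‖ ≤ ‖avgMap φ w‖ + ‖avgMap φ w + w‖ := by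
    have h : w = (avgMap φ w + w) - avgMap φ w := by ring
    calc ‖w‖ = ‖(avgMap φ w + w) - avgMap φ w‖ := by rw [← h]
      _ ≤ ‖avgMap φ w + w‖ + ‖avgMap φ w‖ :=
          norm_sub_le _ _
      _ = _ := by ring
  nlinarith [norm_nonneg w, norm_nonneg (avgMap φ w)]
end

section
/- Let 0 ≤ r < 1, set R = (1 + r)/(1 − r), and let g be a Möbius transformation of the unit disk, g(z) = e^{iθ}·(z − a)/(1 − ā·z) with θ ∈ ℝ and a ∈ 𝔻 satisfying |a| ≤ r. Let ε > 0 and let ψ : S¹ → S¹ be continuous with d_{S¹}(ψ(ζ), ζ) < ε for every ζ ∈ S¹. Then d_{S¹}(g(ψ(g^{-1}(ζ))), ζ) < R·ε for every ζ ∈ S¹. -/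
/-- The boundary-correspondence angle function of the Möbius transformation
`z ↦ e^{iθ}(z-a)/(1-āz)`. -/
noncomputable def Hfun (θ : ℝ) (a : ℂ) (t : ℝ) : ℝ :=
  θ + t + 2 * Real.arctan ((a.re * Real.sin t - a.im * Real.cos t) /
    (1 - (a.re * Real.cos t + a.im * Real.sin t)))

lemma exp_two_arctan (v : ℝ) :
    Complex.exp (Complex.I * (2 * Real.arctan v : ℝ)) =
      (1 + (v:ℂ) * Complex.I) / (1 - (v:ℂ) * Complex.I) := by
  have hS : (0:ℝ) < Real.sqrt (1 + v ^ 2) := Real.sqrt_pos.2 (by positivity)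
  have hS2 : (Real.sqrt (1 + v ^ 2)) ^ 2 = 1 + v ^ 2 := Real.sq_sqrt (by positivity)
  have h1 : Complex.exp (Complex.I * (2 * Real.arctan v : ℝ)) =
      (Complex.exp ((Real.arctan v : ℂ) * Complex.I)) ^ 2 := by
    rw [← Complex.exp_nat_mul]; push_cast; ring_nf
  rw [h1, Complex.exp_mul_I]
  rw [← Complex.ofReal_cos, ← Complex.ofReal_sin, Real.cos_arctan, Real.sin_arctan]
  have hd : (1:ℂ) - (v:ℂ) * Complex.I ≠ 0 := by
    intro h
    have := congrArg Complex.re h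
    simp at this
  have hC : ((Real.sqrt (1 + v ^ 2) : ℝ) : ℂ) ^ 2 = 1 + (v:ℂ) ^ 2 := by
    exact_mod_cast congrArg Complex.ofReal hS2
  have hS0 : ((Real.sqrt (1 + v ^ 2) : ℝ) : ℂ) ≠ 0 := by exact_mod_cast hS.ne'
  push_cast
  field_simp
  rw [hC]
  linear_combination (-(v:ℂ)^2) * (1 + (v:ℂ) * Complex.I) * Complex.I_sq

lemma abs_exp_I_mul (t : ℝ) : ‖Complex.exp (Complex.I * (t:ℂ))‖ = 1 := by
  rw [mul_comm]; exact Complex.norm_exp_ofReal_mul_I t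

lemma c_le (a : ℂ) (t : ℝ) : |a.re * Real.cos t + a.im * Real.sin t| ≤ ‖a‖ := by
  have h := Complex.abs_re_le_norm ((starRingEnd ℂ) a * Complex.exp (Complex.I * t))
  have hre : ((starRingEnd ℂ) a * Complex.exp (Complex.I * t)).re
      = a.re * Real.cos t + a.im * Real.sin t := by
    rw [Complex.mul_re]
    simp [Complex.exp_re, Complex.exp_im, Complex.conj_re, Complex.conj_im]
  rw [hre, norm_mul, abs_exp_I_mul, Complex.norm_conj] at h
  simpa using h

lemma mobius_exp (θ : ℝ) (a : ℂ) (ha : ‖a‖ < 1) (t : ℝ) :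
    Complex.exp (Complex.I * (θ:ℂ)) * (Complex.exp (Complex.I * (t:ℂ)) - a) /
      (1 - (starRingEnd ℂ) a * Complex.exp (Complex.I * (t:ℂ)))
    = Complex.exp (Complex.I * (Hfun θ a t : ℝ)) := by
  set c : ℝ := a.re * Real.cos t + a.im * Real.sin t with hc
  set P : ℝ := a.re * Real.sin t - a.im * Real.cos t with hP
  have hQpos : 0 < 1 - c := by
    have h1 := (abs_le.1 (c_le a t)).2
    rw [← hc] at h1
    linarith
  set v : ℝ := P / (1 - c) with hv
  have hcne : (1:ℂ) - (c:ℂ) ≠ 0 := by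
    intro h
    have : ((1 - c : ℝ) : ℂ) = 0 := by push_cast; linear_combination h
    exact hQpos.ne' (by exact_mod_cast this)
  have hvC : (v:ℂ) = (P:ℂ) / (1 - (c:ℂ)) := by rw [hv]; push_cast; ring
  set z : ℂ := (starRingEnd ℂ) a * Complex.exp (Complex.I * (t:ℂ)) with hz
  have hzre : z.re = c := by
    rw [hz, Complex.mul_re]
    simp [Complex.exp_re, Complex.exp_im, Complex.conj_re, Complex.conj_im, hc]
  have hzim : z.im = P := by
    rw [hz, Complex.mul_im]
    simp [Complex.exp_re, Complex.exp_im, Complex.conj_re, Complex.conj_im, hP]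
    ring
  have hzeq : z = (c:ℂ) + (P:ℂ) * Complex.I := by
    apply Complex.ext <;> simp [hzre, hzim]
  have h1z : 1 - z = (1 - (c:ℂ)) * (1 - (v:ℂ) * Complex.I) := by
    rw [hzeq, hvC]; field_simp; ring
  have h1zc : 1 - (starRingEnd ℂ) z = (1 - (c:ℂ)) * (1 + (v:ℂ) * Complex.I) := by
    have : (starRingEnd ℂ) z = (c:ℂ) - (P:ℂ) * Complex.I := by
      rw [hzeq]; rw [map_add, map_mul]
      simp [Complex.conj_ofReal, Complex.conj_I]
      ring
    rw [this, hvC]; field_simp; ring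
  have hconjz : (starRingEnd ℂ) z = a * Complex.exp (-(Complex.I * (t:ℂ))) := by
    rw [hz, map_mul, Complex.conj_conj, ← Complex.exp_conj]
    congr 1
    rw [map_mul, Complex.conj_I, Complex.conj_ofReal]
    ring
  have hnum : Complex.exp (Complex.I * (t:ℂ)) - a
      = Complex.exp (Complex.I * (t:ℂ)) * (1 - (starRingEnd ℂ) z) := by
    rw [hconjz, mul_sub, mul_one, ← mul_assoc, mul_comm (Complex.exp _) a, mul_assoc,
      ← Complex.exp_add]
    simp
  have hratio : (1 - (starRingEnd ℂ) z) / (1 - z)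
      = Complex.exp (Complex.I * ((2 * Real.arctan v : ℝ) : ℂ)) := by
    rw [exp_two_arctan, h1z, h1zc, mul_div_mul_left _ _ hcne]
  rw [hnum]
  rw [show Hfun θ a t = θ + t + 2 * Real.arctan v by rw [Hfun, hv]]
  rw [mul_div_assoc, mul_div_assoc, hratio, ← Complex.exp_add, ← Complex.exp_add]
  congr 1
  push_cast
  ring

lemma Hfun_lipschitz (θ : ℝ) (a : ℂ) (r : ℝ) (hr0 : 0 ≤ r) (hr1 : r < 1)
    (ha : ‖a‖ ≤ r) (x y : ℝ) :
    |Hfun θ a x - Hfun θ a y| ≤ ((1 + r) / (1 - r)) * |x - y| := by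
  set A := a.re
  set B := a.im
  have hs2 : A^2 + B^2 ≤ r^2 := by
    have h := Complex.sq_norm a
    have : ‖a‖ ^ 2 ≤ r ^ 2 := by nlinarith [norm_nonneg a]
    rw [Complex.sq_norm, Complex.normSq_apply] at this
    nlinarith
  set D : ℝ → ℝ := fun t =>
    1 + 2 * (1 / (1 + ((A * Real.sin t - B * Real.cos t) / (1 - (A * Real.cos t + B * Real.sin t)))^2) *
      (((A * Real.cos t + B * Real.sin t) * (1 - (A * Real.cos t + B * Real.sin t)) -
        (A * Real.sin t - B * Real.cos t) * (A * Real.sin t - B * Real.cos t)) /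
        (1 - (A * Real.cos t + B * Real.sin t))^2)) with hD
  have hQpos : ∀ t : ℝ, 0 < 1 - (A * Real.cos t + B * Real.sin t) := by
    intro t
    have h1 := (abs_le.1 (c_le a t)).2
    have : ‖a‖ < 1 := lt_of_le_of_lt ha hr1
    simp only [A, B] at *
    linarith
  have hderiv : ∀ t : ℝ, HasDerivAt (Hfun θ a) (D t) t := by
    intro t
    have hsin : HasDerivAt Real.sin (Real.cos t) t := Real.hasDerivAt_sin t
    have hcos : HasDerivAt Real.cos (-Real.sin t) t := Real.hasDerivAt_cos t
    have hPd : HasDerivAt (fun t => A * Real.sin t - B * Real.cos t)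
        (A * Real.cos t + B * Real.sin t) t := by
      have := ((hsin.const_mul A).sub (hcos.const_mul B))
      exact this.congr_deriv (by ring)
    have hQd : HasDerivAt (fun t => 1 - (A * Real.cos t + B * Real.sin t))
        (A * Real.sin t - B * Real.cos t) t := by
      have := (((hcos.const_mul A).add (hsin.const_mul B)).const_sub 1)
      exact this.congr_deriv (by ring)
    have hdiv := hPd.div hQd (ne_of_gt (hQpos t))
    have harct := hdiv.arctan
    have h0 : HasDerivAt (fun u : ℝ => θ + u) 1 t := (hasDerivAt_id t).const_add θ
    have hsum := h0.add (harct.const_mul 2)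
    rw [hD]
    convert hsum using 2 with u
    all_goals rfl
  have hDval : ∀ C P : ℝ, (1:ℝ) - C ≠ 0 → 1 + 2 * (1 / (1 + (P / (1 - C)) ^ 2) *
      ((C * (1 - C) - P * P) / (1 - C) ^ 2)) = (1 - (C ^ 2 + P ^ 2)) / ((1 - C) ^ 2 + P ^ 2) := by
    intro C P h
    have h2 : (1 - C) ^ 2 + P ^ 2 ≠ 0 := by positivity
    field_simp
    ring
  have hbound : ∀ t : ℝ, ‖D t‖ ≤ (1 + r) / (1 - r) := by
    intro t
    obtain ⟨C, P, hCdef, hPdef⟩ : ∃ C P : ℝ, C = A * Real.cos t + B * Real.sin t ∧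
        P = A * Real.sin t - B * Real.cos t := ⟨_, _, rfl, rfl⟩
    have hQ : 0 < 1 - C := hCdef ▸ hQpos t
    have hst := Real.sin_sq_add_cos_sq t
    have hcp : C ^ 2 + P ^ 2 = A ^ 2 + B ^ 2 := by
      rw [hCdef, hPdef]; linear_combination (A ^ 2 + B ^ 2) * hst
    have hCr : C ≤ r := by
      rw [hCdef]; exact le_trans (le_trans (le_abs_self _) (c_le a t)) ha
    have hDt : D t = (1 - (C ^ 2 + P ^ 2)) / ((1 - C) ^ 2 + P ^ 2) := by
      simp only [hD]
      rw [← hCdef, ← hPdef]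
      exact hDval C P (ne_of_gt hQ)
    have hnum : 0 ≤ 1 - (C ^ 2 + P ^ 2) := by nlinarith
    have hdenpos : 0 < (1 - C) ^ 2 + P ^ 2 := by positivity
    rw [Real.norm_eq_abs, hDt, abs_div, _root_.abs_of_nonneg hnum, _root_.abs_of_pos hdenpos,
      div_le_div_iff₀ hdenpos (by linarith : (0:ℝ) < 1 - r)]
    nlinarith [mul_nonneg (sub_nonneg.2 hCr) (le_of_lt hQ), sq_nonneg P]
  have hmvt := (convex_univ : Convex ℝ (Set.univ : Set ℝ)).norm_image_sub_le_of_norm_hasDerivWithin_le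
    (f := Hfun θ a) (f' := D)
    (fun u _ => (hderiv u).hasDerivWithinAt) (fun u _ => hbound u)
    (Set.mem_univ y) (Set.mem_univ x)
  simpa [Real.norm_eq_abs] using hmvt

lemma dS1_bddBelow (ζ₁ ζ₂ : ℂ) : BddBelow {d : ℝ | ∃ x₁ x₂ : ℝ,
    ζ₁ = Complex.exp (Complex.I * (x₁ : ℂ)) ∧
    ζ₂ = Complex.exp (Complex.I * (x₂ : ℂ)) ∧ d = |x₁ - x₂|} := by
  refine ⟨0, ?_⟩
  rintro d ⟨x₁, x₂, -, -, rfl⟩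
  positivity

lemma dS1_le (x₁ x₂ : ℝ) :
    dS1 (Complex.exp (Complex.I * (x₁:ℂ))) (Complex.exp (Complex.I * (x₂:ℂ))) ≤ |x₁ - x₂| :=
  csInf_le (dS1_bddBelow _ _) ⟨x₁, x₂, rfl, rfl, rfl⟩

lemma eq_exp_arg {u : ℂ} (hu : ‖u‖ = 1) :
    u = Complex.exp (Complex.I * (u.arg : ℂ)) := by
  have h := Complex.norm_mul_exp_arg_mul_I u
  rw [hu] at h
  rw [mul_comm]
  simpa using h.symm

lemma dS1_reps {u w : ℂ} (hu : ‖u‖ = 1) (hw : ‖w‖ = 1) {ε : ℝ}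
    (h : dS1 u w < ε) : ∃ x y : ℝ, u = Complex.exp (Complex.I * (x:ℂ)) ∧
      w = Complex.exp (Complex.I * (y:ℂ)) ∧ |x - y| < ε := by
  have hne : {d : ℝ | ∃ x₁ x₂ : ℝ, u = Complex.exp (Complex.I * (x₁ : ℂ)) ∧
      w = Complex.exp (Complex.I * (x₂ : ℂ)) ∧ d = |x₁ - x₂|}.Nonempty :=
    ⟨|u.arg - w.arg|, u.arg, w.arg, eq_exp_arg hu, eq_exp_arg hw, rfl⟩
  obtain ⟨d, ⟨x, y, hx, hy, rfl⟩, hdε⟩ := exists_lt_of_csInf_lt hne h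
  exact ⟨x, y, hx, hy, hdε⟩

/-- Let `0 ≤ r < 1`, `R = (1 + r)/(1 − r)`, and let
`g(z) = e^{iθ}·(z − a)/(1 − ā·z)` be a Möbius transformation of the disk with
`|a| ≤ r`, whose inverse is `g⁻¹(ζ) = (e^{−iθ}ζ + a)/(1 + ā·e^{−iθ}ζ)`.
If `ψ : S¹ → S¹` is continuous with `d_{S¹}(ψ(ζ), ζ) < ε` on `S¹`, then
`d_{S¹}(g(ψ(g⁻¹(ζ))), ζ) < R·ε` for every `ζ ∈ S¹`. -/
theorem stmt_15 (r : ℝ) (hr0 : 0 ≤ r) (hr1 : r < 1) (θ : ℝ) (a : ℂ)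
    (ha : ‖a‖ ≤ r) (ε : ℝ) (hε : 0 < ε) (ψ : ℂ → ℂ)
    (hcont : ContinuousOn ψ {z : ℂ | ‖z‖ = 1})
    (hmaps : ∀ ζ : ℂ, ‖ζ‖ = 1 → ‖ψ ζ‖ = 1)
    (hclose : ∀ ζ : ℂ, ‖ζ‖ = 1 → dS1 (ψ ζ) ζ < ε) :
    ∀ ζ : ℂ, ‖ζ‖ = 1 →
      dS1
        (Complex.exp (Complex.I * (θ : ℂ)) *
          (ψ ((Complex.exp (-(Complex.I * (θ : ℂ))) * ζ + a) /
              (1 + (starRingEnd ℂ) a * (Complex.exp (-(Complex.I * (θ : ℂ))) * ζ))) - a) /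
          (1 - (starRingEnd ℂ) a *
            ψ ((Complex.exp (-(Complex.I * (θ : ℂ))) * ζ + a) /
              (1 + (starRingEnd ℂ) a * (Complex.exp (-(Complex.I * (θ : ℂ))) * ζ)))))
        ζ < ((1 + r) / (1 - r)) * ε := by
  intro ζ hζ
  have ha1 : ‖a‖ < 1 := lt_of_le_of_lt ha hr1
  set E : ℂ := Complex.exp (-(Complex.I * (θ:ℂ))) with hE
  have hEabs : ‖E‖ = 1 := by
    rw [hE, show -(Complex.I * (θ:ℂ)) = Complex.I * ((-θ : ℝ):ℂ) by push_cast; ring]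
    rw [mul_comm]; exact Complex.norm_exp_ofReal_mul_I (-θ)
  set den : ℂ := 1 + (starRingEnd ℂ) a * (E * ζ) with hden
  have hdenne : den ≠ 0 := by
    intro h0
    have h1 : ‖(starRingEnd ℂ) a * (E * ζ)‖ = ‖a‖ := by
      rw [norm_mul, norm_mul, Complex.norm_conj, hEabs, hζ]; ring
    have h2 : (starRingEnd ℂ) a * (E * ζ) = -1 := by linear_combination h0
    rw [h2] at h1
    simp at h1
    linarith
  set w : ℂ := (E * ζ + a) / den with hw
  have hζζ : ζ * (starRingEnd ℂ) ζ = 1 := by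
    rw [Complex.mul_conj, ← Complex.sq_norm, hζ]
    norm_num
  have hEE : E * (starRingEnd ℂ) E = 1 := by
    rw [Complex.mul_conj, ← Complex.sq_norm, hEabs]
    norm_num
  have hnumden : (E * ζ + a) * (starRingEnd ℂ) (E * ζ + a) = den * (starRingEnd ℂ) den := by
    rw [hden]
    have hprod : (E * (starRingEnd ℂ) E) * (ζ * (starRingEnd ℂ) ζ) = 1 := by
      rw [hEE, hζζ]; ring
    simp only [map_add, map_mul, map_one, Complex.conj_conj]
    linear_combination (1 - a * (starRingEnd ℂ) a) * hprod
  have hwabs : ‖w‖ = 1 := by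
    have h1 : Complex.normSq (E * ζ + a) = Complex.normSq den := by
      have := hnumden
      rw [Complex.mul_conj, Complex.mul_conj] at this
      exact_mod_cast this
    rw [hw, norm_div]
    rw [← Complex.sq_norm, ← Complex.sq_norm den] at h1
    have h2 : ‖E * ζ + a‖ = ‖den‖ := by
      have := norm_nonneg (E * ζ + a)
      have := norm_nonneg den
      nlinarith
    rw [h2, div_self]
    simpa using hdenne
  have hginv : Complex.exp (Complex.I * (θ:ℂ)) * (w - a) / (1 - (starRingEnd ℂ) a * w) = ζ := by
    have hca : (1:ℂ) - (starRingEnd ℂ) a * a ≠ 0 := by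
      intro h0
      have h2 : (starRingEnd ℂ) a * a = 1 := by linear_combination -h0
      have h3 : ‖(starRingEnd ℂ) a * a‖ = 1 := by rw [h2]; simp
      rw [norm_mul, Complex.norm_conj] at h3
      nlinarith [norm_nonneg a]
    have hEexp : Complex.exp (Complex.I * (θ:ℂ)) * E = 1 := by
      rw [hE, ← Complex.exp_add]; simp
    have h1mw : 1 - (starRingEnd ℂ) a * w = (1 - (starRingEnd ℂ) a * a) / den := by
      rw [hw, hden]
      have hd' : (1 + (starRingEnd ℂ) a * (E * ζ)) ≠ 0 := hdenne
      rw [eq_div_iff hd', sub_mul, one_mul, mul_assoc, div_mul_cancel₀ _ hd']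
      ring
    have hwma : w - a = E * ζ * (1 - (starRingEnd ℂ) a * a) / den := by
      rw [hw, hden]
      have hd' : (1 + (starRingEnd ℂ) a * (E * ζ)) ≠ 0 := hdenne
      rw [eq_div_iff hd', sub_mul, div_mul_cancel₀ _ hd']
      ring
    rw [h1mw, hwma]
    field_simp
    linear_combination ζ * hEexp
  have huabs : ‖ψ w‖ = 1 := hmaps w hwabs
  obtain ⟨x, y, hx, hy, hxy⟩ := dS1_reps huabs hwabs (hclose w hwabs)
  rw [hx, mobius_exp θ a ha1 x]
  have hζeq : ζ = Complex.exp (Complex.I * ((Hfun θ a y : ℝ) : ℂ)) := by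
    conv_lhs => rw [← hginv]
    rw [hy, mobius_exp θ a ha1 y]
  rw [hζeq]
  calc dS1 (Complex.exp (Complex.I * ((Hfun θ a x : ℝ):ℂ)))
        (Complex.exp (Complex.I * ((Hfun θ a y : ℝ):ℂ)))
      ≤ |Hfun θ a x - Hfun θ a y| := dS1_le _ _
    _ ≤ ((1 + r) / (1 - r)) * |x - y| := Hfun_lipschitz θ a r hr0 hr1 ha x y
    _ < ((1 + r) / (1 - r)) * ε := by
        apply mul_lt_mul_of_pos_left hxy
        apply div_pos <;> linarith
end
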